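/- Let α be the real root of x³ − x − 1 and a = α(α+1)/(2α²+3α) (equivalently a = (α+1)/((α−β)(α−γ)) where β, γ are the other roots). Then there are no integers n ≥ 1, m ≥ 1, and d with 1 ≤ d ≤ 9 such that 9·a·α^n = d·10^m. Equivalently, the quantity Λ₁ = (9a/d)·α^n·10^{−m} − 1 is nonzero for all such n, m, d. -/

import Mathlib

lemma no_rat_cube_root (r : ℚ) : r ^ 3 ≠ r + 1 := by
  intro h
  set n : ℤ := r.num with hn
  set d : ℤ := (r.den : ℤ) with hd
  have hd0 : (d : ℚ) ≠ 0 := by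
    simp only [hd]
    exact_mod_cast r.den_nz
  have hr : (r : ℚ) = (n : ℚ) / (d : ℚ) := by
    rw [hn, hd]; exact_mod_cast (Rat.num_div_den r).symm
  have key : (n : ℚ) ^ 3 = n * d ^ 2 + d ^ 3 := by
    rw [hr] at h
    field_simp at h
    have := mul_right_cancel₀ hd0 (by linear_combination (d : ℚ) * h :
      (n : ℚ) ^ 3 * d = (n * d ^ 2 + d ^ 3) * d)
    exact this
  have keyZ : n ^ 3 = n * d ^ 2 + d ^ 3 := by exact_mod_cast key
  have hco : IsCoprime n d := by
    rw [Int.isCoprime_iff_gcd_eq_one]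
    exact r.reduced
  have hdvd : d ∣ n ^ 3 := ⟨n * d + d ^ 2, by linear_combination keyZ⟩
  obtain ⟨u, v, huv⟩ := (hco.symm).pow_right (n := 3)
  have hd1 : d ∣ 1 := by
    obtain ⟨k, hk⟩ := hdvd
    exact ⟨u + v * k, by rw [← huv, hk]; ring⟩
  have hdpos : 0 < d := by
    rw [hd]; exact_mod_cast r.pos
  have hd1' : d = 1 := Int.eq_one_of_dvd_one (le_of_lt hdpos) hd1
  rw [hd1'] at keyZ
  have hn1 : n ∣ 1 := ⟨n ^ 2 - 1, by linear_combination -keyZ⟩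
  rcases Int.isUnit_iff.mp (isUnit_of_dvd_one hn1) with h1 | h1 <;>
    rw [h1] at keyZ <;> norm_num at keyZ


lemma irr_root (α : ℝ) (hα : α ^ 3 = α + 1) : Irrational α := by
  intro ⟨r, hr⟩
  apply no_rat_cube_root r
  have : ((r ^ 3 : ℚ) : ℝ) = ((r + 1 : ℚ) : ℝ) := by
    push_cast
    rw [hr]; exact hα
  exact_mod_cast this

lemma lin_indep (α : ℝ) (hα : α ^ 3 = α + 1) (A B C : ℤ)
    (h : (A : ℝ) * α ^ 2 + B * α + C = 0) : A = 0 ∧ B = 0 ∧ C = 0 := by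
  have hirr := irr_root α hα
  -- derived linear relation: u*α + v = 0 with u, v : ℤ
  have hlin : ((A * (A + C) - B ^ 2 : ℤ) : ℝ) * α + ((A ^ 2 - B * C : ℤ) : ℝ) = 0 := by
    push_cast
    linear_combination (A * α - B) * h - (A : ℝ) ^ 2 * hα
  set u : ℤ := A * (A + C) - B ^ 2 with hu
  set v : ℤ := A ^ 2 - B * C with hv
  have hu0 : u = 0 := by
    by_contra huz
    apply hirr
    refine ⟨(-v : ℚ) / (u : ℚ), ?_⟩
    have huR : (u : ℝ) ≠ 0 := Int.cast_ne_zero.mpr huz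
    push_cast
    field_simp
    linarith [hlin]
  have hv0 : v = 0 := by
    rw [hu0] at hlin
    push_cast at hlin
    exact_mod_cast (by linarith [hlin] : ((v : ℤ) : ℝ) = 0)
  have huZ : A * (A + C) - B ^ 2 = 0 := hu0
  have hvZ : A ^ 2 - B * C = 0 := hv0
  by_cases hA : A = 0
  · subst hA
    have hB : B = 0 := by nlinarith [huZ]
    subst hB
    refine ⟨rfl, rfl, ?_⟩
    have : ((C : ℤ) : ℝ) = 0 := by push_cast at h ⊢; linarith [h]
    exact_mod_cast this
  · exfalso
    have hB : B ≠ 0 := by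
      intro hB0
      rw [hB0] at hvZ
      simp at hvZ
      exact hA hvZ
    -- B^3 = A^2 * B + A^3
    have hkey : B ^ 3 = A ^ 2 * B + A ^ 3 := by linear_combination (-B) * huZ + (-A) * hvZ
    apply no_rat_cube_root ((B : ℚ) / (A : ℚ))
    have hAQ : (A : ℚ) ≠ 0 := Int.cast_ne_zero.mpr hA
    field_simp
    have : ((B ^ 3 : ℤ) : ℚ) = ((A ^ 2 * B + A ^ 3 : ℤ) : ℚ) := by exact_mod_cast hkey
    push_cast at this
    linear_combination this


/-- Coefficients of `α^n` in the basis `(α², α, 1)`. -/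
def padCoef : ℕ → ℤ × ℤ × ℤ
  | 0 => (0, 0, 1)
  | n + 1 =>
      let c := padCoef n
      (c.2.1, c.2.2 + c.1, c.1)

lemma padCoef_rep (α : ℝ) (hα : α ^ 3 = α + 1) (n : ℕ) :
    α ^ n = ((padCoef n).1 : ℝ) * α ^ 2 + ((padCoef n).2.1 : ℝ) * α
      + ((padCoef n).2.2 : ℝ) := by
  induction n with
  | zero => simp [padCoef]
  | succ k ih =>
      rw [pow_succ, ih, padCoef]
      push_cast
      linear_combination ((padCoef k).1 : ℝ) * hα
      
lemma padCoef_pos (n : ℕ) :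
    0 ≤ (padCoef n).1 ∧ 0 ≤ (padCoef n).2.1 ∧ 0 ≤ (padCoef n).2.2 ∧
      1 ≤ (padCoef n).1 + (padCoef n).2.1 + (padCoef n).2.2 := by
  induction n with
  | zero => simp [padCoef]
  | succ k ih =>
      obtain ⟨h1, h2, h3, h4⟩ := ih
      simp only [padCoef]
      refine ⟨h2, by linarith, h1, by linarith⟩

lemma padCoef_sum_pos (n : ℕ) (hn : 1 ≤ n) :
    1 ≤ (padCoef n).1 + (padCoef n).2.1 := by
  obtain ⟨k, rfl⟩ : ∃ k, n = k + 1 := ⟨n - 1, by omega⟩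
  obtain ⟨h1, h2, h3, h4⟩ := padCoef_pos k
  simp only [padCoef]
  linarith

/-- With `α` the real root of `x³ − x − 1` and `a = α(α+1)/(2α²+3α)`, there are no
integers `n ≥ 1`, `m ≥ 1`, `1 ≤ d ≤ 9` with `9·a·α^n = d·10^m`; equivalently
`Λ₁ = (9a/d)·α^n·10^(−m) − 1` is nonzero for all such `n, m, d`. -/
theorem Lambda1_nonzero
    (α a : ℝ) (hα : α ^ 3 = α + 1)
    (ha : a = α * (α + 1) / (2 * α ^ 2 + 3 * α)) :
    (¬∃ (n m d : ℕ), 1 ≤ n ∧ 1 ≤ m ∧ 1 ≤ d ∧ d ≤ 9 ∧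
        9 * a * α ^ n = (d : ℝ) * 10 ^ m) ∧
      ∀ (n m d : ℕ), 1 ≤ n → 1 ≤ m → 1 ≤ d → d ≤ 9 →
        (9 * a / (d : ℝ)) * α ^ n * (10 : ℝ) ^ (-(m : ℤ)) - 1 ≠ 0 := by
  have hαpos : 0 < α := by
    nlinarith [sq_nonneg (α - 1), sq_nonneg (α + 1), sq_nonneg α,
      sq_nonneg (α ^ 2 - 1), sq_nonneg (α ^ 2 + α)]
  have hD : 2 * α ^ 2 + 3 * α ≠ 0 := by positivity
  have main : ¬∃ (n m d : ℕ), 1 ≤ n ∧ 1 ≤ m ∧ 1 ≤ d ∧ d ≤ 9 ∧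
      9 * a * α ^ n = (d : ℝ) * 10 ^ m := by
    rintro ⟨n, m, d, hn, hm, hd1, hd9, heq⟩
    set P : ℤ := (padCoef n).1 with hP
    set Q : ℤ := (padCoef n).2.1 with hQ
    set R : ℤ := (padCoef n).2.2 with hR
    set r : ℤ := (d : ℤ) * 10 ^ m with hr
    have hrep := padCoef_rep α hα n
    rw [ha] at heq
    have heq2 : 9 * α * (α + 1) * α ^ n = (r : ℝ) * (2 * α ^ 2 + 3 * α) := by
      rw [hr]
      push_cast
      field_simp at heq
      linear_combination α * heq
    have hrel : ((9 * (P + Q + R) - 2 * r : ℤ) : ℝ) * α ^ 2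
        + ((9 * (2 * P + Q + R) - 3 * r : ℤ) : ℝ) * α
        + ((9 * (P + Q) : ℤ) : ℝ) = 0 := by
      push_cast
      rw [← hP, ← hQ, ← hR] at hrep
      linear_combination heq2 - 9 * α * (α + 1) * hrep
        - (9 * (P : ℝ) * α + 9 * ((P : ℝ) + Q)) * hα
    obtain ⟨-, -, hC⟩ := lin_indep α hα _ _ _ hrel
    have := padCoef_sum_pos n hn
    omega
  refine ⟨main, fun n m d hn hm hd1 hd9 h => ?_⟩
  apply main
  refine ⟨n, m, d, hn, hm, hd1, hd9, ?_⟩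
  have hd0 : (d : ℝ) ≠ 0 := Nat.cast_ne_zero.mpr (by omega)
  have h10 : (10 : ℝ) ^ m ≠ 0 := by positivity
  rw [zpow_neg, zpow_natCast, sub_eq_zero] at h
  field_simp at h
  linear_combination h
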